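/- Let G be an undirected graph with symmetric normalized adjacency L (eigenvalues λ₁ ≤ … ≤ λ_N, λ_N = 1), W ∈ ℝ^{K×K} symmetric with eigenvalues μ₁ ≤ … ≤ μ_K, and α > 0. Consider the solution of x'(t) = −L^α x(t) W. If μ_K · sign(λ₁)|λ₁|^α < μ₁, then for almost all initial conditions x₀ (i.e., whenever the Fourier coefficient of x₀ along the dominant eigendirection is nonzero and the dominant frequency is unique), the normalized Dirichlet energy satisfies E(x(t)/‖x(t)‖) → (1 − λ₁)/2 as t → ∞ (highest-frequency dominance); otherwise E(x(t)/‖x(t)‖) → 0 (lowest-frequency dominance). -/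

import Mathlib

open Matrix Finset Filter Topology


lemma eig_of_spec {N : Type*} [Fintype N] [DecidableEq N]
    (A : Matrix N N ℝ) (ev : N → ℝ) (u : N → N → ℝ)
    (horth : ∀ l l', ∑ i, u l i * u l' i = if l = l' then 1 else 0)
    (hspec : A = ∑ l, ev l • Matrix.vecMulVec (u l) (u l)) (l : N) :
    A.mulVec (u l) = ev l • u l := by
  funext i
  simp only [hspec, Matrix.mulVec, dotProduct, Matrix.sum_apply, Matrix.smul_apply,
    Matrix.vecMulVec_apply, smul_eq_mul, Pi.smul_apply]
  simp_rw [Finset.sum_mul]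
  rw [Finset.sum_comm]
  have : ∀ s, ∑ j, ev s * (u s i * u s j) * u l j
      = ev s * u s i * ∑ j, u s j * u l j := by
    intro s; rw [Finset.mul_sum]; apply Finset.sum_congr rfl; intros; ring
  simp_rw [this, horth]
  simp

lemma kron_eig {K N : Type*} [Fintype K] [Fintype N]
    (A : Matrix K K ℝ) (B : Matrix N N ℝ) (a : K → ℝ) (b : N → ℝ) (al be : ℝ)
    (hA : A.mulVec a = al • a) (hB : B.mulVec b = be • b) :
    (Matrix.kroneckerMap (· * ·) A B).mulVec (fun p => a p.1 * b p.2)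
      = (al * be) • (fun p => a p.1 * b p.2) := by
  funext q
  have hA' := congrFun hA q.1
  have hB' := congrFun hB q.2
  simp only [Matrix.mulVec, dotProduct, Pi.smul_apply, smul_eq_mul] at *
  rw [Fintype.sum_prod_type]
  have : ∀ p1 : K, ∑ p2 : N, Matrix.kroneckerMap (· * ·) A B q (p1, p2) * (a p1 * b p2)
      = (A q.1 p1 * a p1) * ∑ p2, B q.2 p2 * b p2 := by
    intro p1; rw [Finset.mul_sum]; apply Finset.sum_congr rfl; intro p2 _
    simp [Matrix.kroneckerMap]; ring
  simp_rw [this, ← Finset.sum_mul, hA', hB']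
  ring

lemma mulVec_sum'' {P : Type*} [Fintype P] (M : Matrix P P ℝ) {ι : Type*} (s : Finset ι)
    (g : ι → P → ℝ) : M.mulVec (∑ q ∈ s, g q) = ∑ q ∈ s, M.mulVec (g q) := by
  funext p
  simp [Matrix.mulVec, dotProduct, Finset.mul_sum]
  exact Finset.sum_comm

lemma key {K N : Type*} [Fintype K] [Fintype N] [DecidableEq K] [DecidableEq N]
    [Nonempty K] [Nonempty N]
    (M : Matrix (K × N) (K × N) ℝ) (ν : K × N → ℝ)
    (v : K × N → EuclideanSpace ℝ (K × N))
    (hv_orth : Orthonormal ℝ v)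
    (hv_eig : ∀ q, M.mulVec (v q) = ν q • (v q : (K × N) → ℝ))
    (x₀ : EuclideanSpace ℝ (K × N)) (y : ℝ → EuclideanSpace ℝ (K × N))
    (hy0 : y 0 = x₀)
    (hy : ∀ t, HasDerivAt y (WithLp.toLp 2 (-(M.mulVec (y t)) : (K × N) → ℝ)) t)
    (q0 : K × N) (hdom : ∀ q, q ≠ q0 → ν q0 < ν q)
    (hc0 : (∑ p, x₀ p * v q0 p) ≠ 0)
    (G : (K × N → ℝ) → ℝ) (hGcont : Continuous G)
    (hGsmul : ∀ (a : ℝ) (w : K × N → ℝ), G (a • w) = a ^ 2 * G w) :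
    Tendsto (fun t => G ((‖y t‖)⁻¹ • y t)) atTop (𝓝 (G (v q0))) := by
  classical
  -- orthonormal basis
  have hcard : Fintype.card (K × N) = Module.finrank ℝ (EuclideanSpace ℝ (K × N)) := by
    simp [finrank_euclideanSpace]
  let bb : Module.Basis (K × N) ℝ (EuclideanSpace ℝ (K × N)) :=
    basisOfLinearIndependentOfCardEqFinrank hv_orth.linearIndependent hcard
  have hsp : ⊤ ≤ Submodule.span ℝ (Set.range v) := by
    rw [show Set.range v = Set.range bb by
      rw [coe_basisOfLinearIndependentOfCardEqFinrank], bb.span_eq]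
  let b : OrthonormalBasis (K × N) ℝ (EuclideanSpace ℝ (K × N)) :=
    OrthonormalBasis.mk hv_orth hsp
  have hb : ∀ q, b q = v q := fun q => by simp [b]
  set cf : K × N → ℝ := fun q => b.repr x₀ q with hcf
  have hcf_eq : ∀ q, cf q = ∑ p, x₀ p * v q p := by
    intro q
    show b.repr x₀ q = _
    rw [b.repr_apply_apply, hb]
    simp [PiLp.inner_apply, RCLike.inner_apply, mul_comm]
  have hcf0 : cf q0 ≠ 0 := by rw [hcf_eq]; exact hc0
  -- the explicit solution
  set z : ℝ → EuclideanSpace ℝ (K × N) :=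
    fun t => ∑ q, (cf q * Real.exp (-ν q * t)) • v q with hz
  have hz0 : z 0 = x₀ := by
    rw [hz]
    simp only [mul_zero, Real.exp_zero, mul_one]
    calc (∑ q, cf q • v q) = ∑ q, b.repr x₀ q • b q := by
          apply Finset.sum_congr rfl; intro q _; rw [hb]
      _ = x₀ := b.sum_repr x₀
  have hzderiv : ∀ t, HasDerivAt z (WithLp.toLp 2 (-(M.mulVec (z t)) : (K × N) → ℝ)) t := by
    intro t
    have h1 : HasDerivAt z (∑ q, (cf q * (Real.exp (-ν q * t) * -ν q)) • v q) t := by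
      rw [hz]
      apply HasDerivAt.fun_sum
      intro q _
      have hs : HasDerivAt (fun t => cf q * Real.exp (-ν q * t))
          (cf q * (Real.exp (-ν q * t) * -ν q)) t := by
        have : HasDerivAt (fun t : ℝ => -ν q * t) (-ν q) t := by
          simpa using (hasDerivAt_id t).const_mul (-ν q)
        exact (this.exp).const_mul (cf q)
      exact hs.smul_const (v q)
    have hmv : M.mulVec (z t) = ∑ q, (cf q * Real.exp (-ν q * t)) • (ν q • (v q : (K × N) → ℝ)) := by
      have hzt : (z t : (K × N) → ℝ) = ∑ q, ((cf q * Real.exp (-ν q * t)) • (v q : (K × N) → ℝ)) := by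
        rw [hz, WithLp.ofLp_sum]; rfl
      rw [hzt, mulVec_sum'' M]
      apply Finset.sum_congr rfl
      intro q _
      rw [Matrix.mulVec_smul, hv_eig q]
    have heq : (∑ q, (cf q * (Real.exp (-ν q * t) * -ν q)) • v q)
        = WithLp.toLp 2 (-(M.mulVec (z t)) : (K × N) → ℝ) := by
      rw [hmv, ← Finset.sum_neg_distrib, WithLp.toLp_sum]
      refine Finset.sum_congr rfl fun q _ => ?_
      ext p
      simp
      ring
    exact heq ▸ h1
  -- uniqueness of the ODE solution
  set T : EuclideanSpace ℝ (K × N) →L[ℝ] EuclideanSpace ℝ (K × N) :=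
    LinearMap.toContinuousLinearMap (Matrix.toEuclideanLin (-M)) with hT
  have hTx : ∀ x : EuclideanSpace ℝ (K × N), T x = WithLp.toLp 2 (-(M.mulVec x) : (K × N) → ℝ) := by
    intro x
    show Matrix.toEuclideanLin (-M) x = _
    rw [Matrix.toEuclideanLin_apply, Matrix.neg_mulVec]
  have hyz : ∀ t : ℝ, 0 ≤ t → y t = z t := by
    intro t ht
    have hcy : Continuous y := continuous_iff_continuousAt.mpr fun s => (hy s).continuousAt
    have hcz : Continuous z := continuous_iff_continuousAt.mpr fun s => (hzderiv s).continuousAt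
    have huniq := ODE_solution_unique (v := fun _ x => T x) (K := ‖T‖₊) (a := 0) (b := t)
      (fun _ => T.lipschitz)
      hcy.continuousOn
      (fun s _ => by
        have := (hy s).hasDerivWithinAt (s := Set.Ici s)
        rw [← hTx] at this
        exact this)
      hcz.continuousOn
      (fun s _ => by
        have := (hzderiv s).hasDerivWithinAt (s := Set.Ici s)
        rw [← hTx] at this
        exact this)
      (hy0.trans hz0.symm)
    exact huniq (Set.mem_Icc.mpr ⟨ht, le_refl t⟩)
  -- asymptotics
  set w : EuclideanSpace ℝ (K × N) := cf q0 • v q0 with hw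
  set u : ℝ → EuclideanSpace ℝ (K × N) :=
    fun t => ∑ q, (cf q * Real.exp (-(ν q - ν q0) * t)) • v q with hu
  have hzu : ∀ t, z t = Real.exp (-ν q0 * t) • u t := by
    intro t
    rw [hz, hu]
    simp only
    rw [Finset.smul_sum]
    refine Finset.sum_congr rfl fun q _ => ?_
    rw [smul_smul]
    congr 1
    symm
    calc Real.exp (-ν q0 * t) * (cf q * Real.exp (-(ν q - ν q0) * t))
        = cf q * (Real.exp (-ν q0 * t) * Real.exp (-(ν q - ν q0) * t)) := by ring
      _ = cf q * Real.exp (-ν q0 * t + -(ν q - ν q0) * t) := by rw [Real.exp_add]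
      _ = cf q * Real.exp (-ν q * t) := by ring_nf
  have hulim : Tendsto u atTop (𝓝 w) := by
    have h2 : ∀ q, Tendsto (fun t => (cf q * Real.exp (-(ν q - ν q0) * t)) • v q) atTop
        (𝓝 (if q = q0 then w else 0)) := by
      intro q
      by_cases hq : q = q0
      · subst hq
        simp only [sub_self, neg_zero, zero_mul, Real.exp_zero, mul_one, if_pos]
        exact tendsto_const_nhds
      · have hd : (0 : ℝ) < ν q - ν q0 := sub_pos.mpr (hdom q hq)
        have h3 : Tendsto (fun t : ℝ => (ν q - ν q0) * t) atTop atTop :=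
          Tendsto.const_mul_atTop hd tendsto_id
        have h3' : Tendsto (fun t : ℝ => -(ν q - ν q0) * t) atTop atBot := by
          simp only [neg_mul]
          exact tendsto_neg_atTop_atBot.comp h3
        have h4 : Tendsto (fun t => cf q * Real.exp (-(ν q - ν q0) * t)) atTop
            (𝓝 (cf q * 0)) := (Real.tendsto_exp_atBot.comp h3').const_mul (cf q)
        simpa [hq] using h4.smul_const (v q)
    have h5 := tendsto_finset_sum Finset.univ (fun q (_ : q ∈ Finset.univ) => h2 q)
    have h6 : (∑ q : K × N, (if q = q0 then w else (0 : EuclideanSpace ℝ (K × N)))) = w := by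
      rw [Finset.sum_ite_eq' Finset.univ q0 (fun _ => w)]
      simp
    rw [h6] at h5
    exact h5
  have hvnorm : ‖v q0‖ = 1 := hv_orth.1 q0
  have hnw : ‖w‖ = |cf q0| := by
    rw [hw, norm_smul, hvnorm, mul_one, Real.norm_eq_abs]
  have hGcont' : Continuous (fun x : EuclideanSpace ℝ (K × N) => G x) :=
    hGcont.comp (PiLp.continuous_ofLp 2 (fun _ : K × N => ℝ))
  have hFcont : ContinuousAt (fun x : EuclideanSpace ℝ (K × N) => G ((‖x‖)⁻¹ • x)) w := by
    refine ContinuousAt.comp (f := fun x : EuclideanSpace ℝ (K × N) => (‖x‖)⁻¹ • (x : (K × N) → ℝ)) hGcont.continuousAt ?_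
    exact (continuousAt_id.norm.inv₀ (by simp only [id_eq]; rw [hnw]; exact abs_ne_zero.mpr hcf0)).smul
      (PiLp.continuous_ofLp 2 (fun _ : K × N => ℝ)).continuousAt
  have hlim : Tendsto (fun t => G ((‖u t‖)⁻¹ • u t)) atTop (𝓝 (G ((‖w‖)⁻¹ • w))) :=
    hFcont.tendsto.comp hulim
  have hval : G ((‖w‖)⁻¹ • w) = G (v q0) := by
    have h1 : (‖w‖)⁻¹ • (w : (K × N) → ℝ) = ((|cf q0|)⁻¹ * cf q0) • (v q0 : (K × N) → ℝ) := by
        rw [hnw, hw, WithLp.ofLp_smul, smul_smul]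
    have h2 : G (((|cf q0|)⁻¹ * cf q0) • v q0) = ((|cf q0|)⁻¹ * cf q0) ^ 2 * G (v q0) :=
      hGsmul _ _
    rw [h1, h2, show ((|cf q0|)⁻¹ * cf q0) ^ 2 = 1 from by
      rw [mul_pow, inv_pow, sq_abs, inv_mul_cancel₀ (pow_ne_zero 2 hcf0)], one_mul]
  rw [← hval]
  apply Tendsto.congr' _ hlim
  filter_upwards [eventually_ge_atTop 0] with t ht
  rw [hyz t ht, hzu t]
  have ha : (0 : ℝ) < Real.exp (-ν q0 * t) := Real.exp_pos _
  congr 1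
  rw [norm_smul, Real.norm_eq_abs, abs_of_pos ha, WithLp.ofLp_smul, smul_smul, mul_inv]
  congr 1
  rcases eq_or_ne (‖u t‖) 0 with h0 | h0
  · rw [h0]
    simp
  · field_simp
lemma prod_dot {K N : Type*} [Fintype K] [Fintype N] (a a' : K → ℝ) (b b' : N → ℝ) :
    ∑ p : K × N, (a p.1 * b p.2) * (a' p.1 * b' p.2)
      = (∑ i, a i * a' i) * (∑ j, b j * b' j) := by
  rw [Finset.sum_mul_sum, Fintype.sum_prod_type]
  refine Finset.sum_congr rfl fun i _ => ?_
  refine Finset.sum_congr rfl fun j _ => ?_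
  ring

lemma cont_quad {P : Type*} [Fintype P] (A : Matrix P P ℝ) :
    Continuous fun v : P → ℝ => (1/2 : ℝ) * dotProduct v (A.mulVec v) := by
  simp only [dotProduct, Matrix.mulVec]
  fun_prop

lemma quad_smul {P : Type*} [Fintype P] (A : Matrix P P ℝ) (a : ℝ) (w : P → ℝ) :
    (1/2 : ℝ) * dotProduct (a • w) (A.mulVec (a • w))
      = a ^ 2 * ((1/2 : ℝ) * dotProduct w (A.mulVec w)) := by
  rw [Matrix.mulVec_smul, smul_dotProduct, dotProduct_smul,
    smul_eq_mul, smul_eq_mul]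
  ring
/-- Let `G` be a connected undirected graph with symmetric
normalized adjacency `L` (eigenvalues `λ₁ ≤ … ≤ λ_N`, `λ_N = 1`, `λ₁ < 0`),
`W` symmetric with eigenvalues `μ₁ ≤ … ≤ μ_K`, and `α > 0`. For the solution of
`x' = −L^α x W` (vectorized: `y' = −(W ⊗ L^α) y`): if
`μ_K · sign(λ₁)|λ₁|^α < μ₁`, then for almost all initial data (i.e. whenever
the Fourier coefficient along the dominant eigendirection is nonzero and the
dominant frequency is unique) the normalized Dirichlet energy converges to
`(1 − λ₁)/2` (HFD); otherwise it converges to `0` (LFD). -/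
theorem fractional_heat_HFD_or_LFD {n kk : ℕ}
    (L : Matrix (Fin (n + 1)) (Fin (n + 1)) ℝ) (hLsym : L.IsSymm)
    (lam : Fin (n + 1) → ℝ) (ψ : Fin (n + 1) → Fin (n + 1) → ℝ)
    (hψorth : ∀ l l', ∑ i, ψ l i * ψ l' i = if l = l' then 1 else 0)
    (hLspec : L = ∑ l, lam l • Matrix.vecMulVec (ψ l) (ψ l))
    (hlam_mono : Monotone lam) (hlam_last : lam (Fin.last n) = 1)
    (hlam_neg : lam 0 < 0)
    (W : Matrix (Fin (kk + 1)) (Fin (kk + 1)) ℝ) (hWsym : W.IsSymm)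
    (μ : Fin (kk + 1) → ℝ) (φ : Fin (kk + 1) → Fin (kk + 1) → ℝ)
    (hφorth : ∀ r r', ∑ i, φ r i * φ r' i = if r = r' then 1 else 0)
    (hWspec : W = ∑ r, μ r • Matrix.vecMulVec (φ r) (φ r))
    (hμ_mono : Monotone μ)
    (α : ℝ) (hα : 0 < α)
    (pw : ℝ → ℝ) (hpw : pw = fun s => Real.sign s * |s| ^ α)
    (Lα : Matrix (Fin (n + 1)) (Fin (n + 1)) ℝ)
    (hLα : Lα = ∑ l, pw (lam l) • Matrix.vecMulVec (ψ l) (ψ l))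
    -- the solution of the vectorized ODE
    (x₀ : EuclideanSpace ℝ (Fin (kk + 1) × Fin (n + 1)))
    (y : ℝ → EuclideanSpace ℝ (Fin (kk + 1) × Fin (n + 1)))
    (hy0 : y 0 = x₀)
    (hy : ∀ t, HasDerivAt y
      (WithLp.toLp 2 (-(Matrix.kroneckerMap (· * ·) W Lα).mulVec (y t) :
        Fin (kk + 1) × Fin (n + 1) → ℝ)) t)
    -- Fourier coefficients of the initial datum
    (c : Fin (kk + 1) → Fin (n + 1) → ℝ)
    (hc : ∀ r l, c r l = ∑ p : Fin (kk + 1) × Fin (n + 1), x₀ p * (φ r p.1 * ψ l p.2))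
    -- Dirichlet energy of the normalized features
    (E : (Fin (kk + 1) × Fin (n + 1) → ℝ) → ℝ)
    (hE : E = fun v => (1 / 2 : ℝ) *
      dotProduct v
        ((Matrix.kroneckerMap (· * ·) (1 : Matrix (Fin (kk + 1)) (Fin (kk + 1)) ℝ)
          (1 - L)).mulVec v)) :
    -- HFD case
    ((μ (Fin.last kk) * pw (lam 0) < μ 0 ∧ c (Fin.last kk) 0 ≠ 0 ∧
        (∀ r l, (r, l) ≠ (Fin.last kk, (0 : Fin (n + 1))) →
          μ (Fin.last kk) * pw (lam 0) < μ r * pw (lam l))) →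
      Tendsto (fun t => E ((‖y t‖)⁻¹ • y t)) atTop (𝓝 ((1 - lam 0) / 2))) ∧
    -- LFD case
    ((¬ (μ (Fin.last kk) * pw (lam 0) < μ 0) ∧ c 0 (Fin.last n) ≠ 0 ∧
        (∀ r l, (r, l) ≠ ((0 : Fin (kk + 1)), Fin.last n) →
          μ 0 * pw (lam (Fin.last n)) < μ r * pw (lam l))) →
      Tendsto (fun t => E ((‖y t‖)⁻¹ • y t)) atTop (𝓝 0)) := by
  have hWeig := eig_of_spec W μ φ hφorth hWspec
  have hLαeig := eig_of_spec Lα (fun l => pw (lam l)) ψ hψorth hLα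
  have hLeig := eig_of_spec L lam ψ hψorth hLspec
  set v : (Fin (kk + 1) × Fin (n + 1)) → EuclideanSpace ℝ (Fin (kk + 1) × Fin (n + 1)) :=
    fun q => WithLp.toLp 2 (fun p => φ q.1 p.1 * ψ q.2 p.2) with hv
  have hv_orth : Orthonormal ℝ v := by
    rw [orthonormal_iff_ite]
    intro a b
    have h0 : (inner ℝ (v a) (v b) : ℝ) = ∑ p : Fin (kk + 1) × Fin (n + 1), v a p * v b p := by
      simp [PiLp.inner_apply, RCLike.inner_apply, mul_comm]
    rw [h0, hv]
    simp only [WithLp.ofLp_toLp]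
    rw [prod_dot, hφorth, hψorth]
    by_cases h1 : a.1 = b.1 <;> by_cases h2 : a.2 = b.2 <;>
      simp [h1, h2, Prod.ext_iff]
  set ν : Fin (kk + 1) × Fin (n + 1) → ℝ := fun q => μ q.1 * pw (lam q.2) with hν
  have hv_eig : ∀ q, (Matrix.kroneckerMap (· * ·) W Lα).mulVec (v q)
      = ν q • (v q : Fin (kk + 1) × Fin (n + 1) → ℝ) :=
    fun q => kron_eig W Lα (φ q.1) (ψ q.2) (μ q.1) (pw (lam q.2)) (hWeig q.1) (hLαeig q.2)
  have hEcont : Continuous E := by rw [hE]; exact cont_quad _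
  have hEsmul : ∀ (a : ℝ) (w : Fin (kk + 1) × Fin (n + 1) → ℝ), E (a • w) = a ^ 2 * E w := by
    intro a w
    rw [hE]
    exact quad_smul _ a w
  have hEval : ∀ q : Fin (kk + 1) × Fin (n + 1), E (v q) = (1 - lam q.2) / 2 := by
    intro q
    have h1 : (1 : Matrix (Fin (kk + 1)) (Fin (kk + 1)) ℝ).mulVec (φ q.1) = (1 : ℝ) • φ q.1 := by
      rw [Matrix.one_mulVec, one_smul]
    have h2 : (1 - L).mulVec (ψ q.2) = (1 - lam q.2) • ψ q.2 := by
      rw [Matrix.sub_mulVec, Matrix.one_mulVec, hLeig q.2, sub_smul, one_smul]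
    have h3 := kron_eig 1 (1 - L) (φ q.1) (ψ q.2) 1 (1 - lam q.2) h1 h2
    have h4 : dotProduct (fun p : Fin (kk + 1) × Fin (n + 1) => φ q.1 p.1 * ψ q.2 p.2)
        (fun p => φ q.1 p.1 * ψ q.2 p.2) = 1 := by
      show (∑ p : Fin (kk + 1) × Fin (n + 1), (φ q.1 p.1 * ψ q.2 p.2) * (φ q.1 p.1 * ψ q.2 p.2)) = 1
      rw [prod_dot, hφorth, hψorth]
      simp
    rw [hE]
    show (1 / 2 : ℝ) * dotProduct (fun p => φ q.1 p.1 * ψ q.2 p.2)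
      ((Matrix.kroneckerMap (· * ·) 1 (1 - L)).mulVec (fun p => φ q.1 p.1 * ψ q.2 p.2)) = _
    rw [h3, dotProduct_smul, smul_eq_mul, h4]
    ring
  constructor
  · rintro ⟨_h1, h2, h3⟩
    have hkey := key (Matrix.kroneckerMap (· * ·) W Lα) ν v hv_orth hv_eig x₀ y hy0 hy
      (Fin.last kk, (0 : Fin (n + 1)))
      (fun q hq => by obtain ⟨r, l⟩ := q; exact h3 r l hq)
      (by
        show (∑ p : Fin (kk + 1) × Fin (n + 1), x₀ p * (φ (Fin.last kk) p.1 * ψ 0 p.2)) ≠ 0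
        rw [← hc]
        exact h2)
      E hEcont hEsmul
    rwa [hEval (Fin.last kk, (0 : Fin (n + 1)))] at hkey
  · rintro ⟨_h1, h2, h3⟩
    have hkey := key (Matrix.kroneckerMap (· * ·) W Lα) ν v hv_orth hv_eig x₀ y hy0 hy
      ((0 : Fin (kk + 1)), Fin.last n)
      (fun q hq => by obtain ⟨r, l⟩ := q; exact h3 r l hq)
      (by
        show (∑ p : Fin (kk + 1) × Fin (n + 1), x₀ p * (φ 0 p.1 * ψ (Fin.last n) p.2)) ≠ 0
        rw [← hc]
        exact h2)
      E hEcont hEsmul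
    rw [hEval ((0 : Fin (kk + 1)), Fin.last n)] at hkey
    simp only [hlam_last, sub_self, zero_div] at hkey
    exact hkey
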